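/- arXiv:math/0410135 — 6 statements merged into one kernel-verified Lean document; each statement's English description precedes it below -/
import Mathlib

section
/- Let {e_i}_{i=1}^d be a basis of ℝ^d and set e_0 = 0. If vectors h_0, h_1, …, h_d ∈ ℝ^d satisfy ⟨h_i − h_j, e_i − e_j⟩ = 0 for every 0 ≤ i < j ≤ d, then there exists a unique skew-symmetric d×d real matrix X such that h_i = X e_i + h_0 for every 1 ≤ i ≤ d. -/
open Matrix

/- STATEMENT 0: Let {e_i}_{i=1}^d be a basis of ℝ^d and set e_0 = 0. If vectors
h_0, h_1, …, h_d ∈ ℝ^d satisfy ⟨h_i − h_j, e_i − e_j⟩ = 0 for every 0 ≤ i < j ≤ d, then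
there exists a unique skew-symmetric d×d real matrix X such that h_i = X e_i + h_0
for every 1 ≤ i ≤ d. -/

/-- The action of a `d × d` real matrix on `ℝ^d` (Euclidean space). -/
noncomputable def matAct {d : ℕ} (X : Matrix (Fin d) (Fin d) ℝ)
    (v : EuclideanSpace ℝ (Fin d)) : EuclideanSpace ℝ (Fin d) :=
  Matrix.toEuclideanLin X v

theorem stmt0 {d : ℕ} (e : Fin d → EuclideanSpace ℝ (Fin d))
    (hli : LinearIndependent ℝ e)
    (hsp : Submodule.span ℝ (Set.range e) = ⊤)
    (h : Fin d → EuclideanSpace ℝ (Fin d)) (h₀ : EuclideanSpace ℝ (Fin d))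
    (hij : ∀ i j : Fin d, i < j → (inner ℝ (h i - h j) (e i - e j) : ℝ) = 0)
    (h0j : ∀ j : Fin d, (inner ℝ (h j - h₀) (e j - 0) : ℝ) = 0) :
    ∃! X : Matrix (Fin d) (Fin d) ℝ,
      Xᵀ = -X ∧ ∀ i : Fin d, h i = matAct X (e i) + h₀ := by
  have hsp' : ⊤ ≤ Submodule.span ℝ (Set.range e) := hsp.ge
  let b : Module.Basis (Fin d) ℝ (EuclideanSpace ℝ (Fin d)) := Module.Basis.mk hli hsp'
  have hb : ∀ i, b i = e i := fun i => Module.Basis.mk_apply hli hsp' i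
  set f : EuclideanSpace ℝ (Fin d) →ₗ[ℝ] EuclideanSpace ℝ (Fin d) :=
    b.constr ℝ (fun i => h i - h₀) with hf
  have hfe : ∀ i, f (e i) = h i - h₀ := by
    intro i
    rw [← hb i, hf, Module.Basis.constr_basis]
  have hdiag : ∀ i, (inner ℝ (f (e i)) (e i) : ℝ) = 0 := by
    intro i
    have := h0j i
    rw [sub_zero] at this
    rw [hfe i]; exact this
  have key : ∀ i j, (inner ℝ (f (e i)) (e j) : ℝ) + inner ℝ (f (e j)) (e i) = 0 := by
    have main : ∀ i j : Fin d, i < j →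
        (inner ℝ (f (e i)) (e j) : ℝ) + inner ℝ (f (e j)) (e i) = 0 := by
      intro i j hlt
      have hij' := hij i j hlt
      have hexp : (inner ℝ ((h i - h₀) - (h j - h₀)) (e i - e j) : ℝ) = 0 := by
        rw [sub_sub_sub_cancel_right]; exact hij'
      rw [← hfe i, ← hfe j] at hexp
      have hi := hdiag i
      have hj := hdiag j
      rw [inner_sub_left, inner_sub_right, inner_sub_right] at hexp
      linarith
    intro i j
    rcases lt_trichotomy i j with hlt | heq | hgt
    · exact main i j hlt
    · subst heq; have := hdiag i; linarith
    · have := main j i hgt; linarith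
  have hadj : LinearMap.adjoint f = -f := by
    have hzero : ∀ i, (LinearMap.adjoint f + f) (e i) = 0 := by
      intro i
      have horth : ∀ v, (inner ℝ ((LinearMap.adjoint f + f) (e i)) v : ℝ) = 0 := by
        intro v
        have hv : v ∈ Submodule.span ℝ (Set.range e) := by rw [hsp]; trivial
        induction hv using Submodule.span_induction with
        | mem x hx =>
          obtain ⟨j, rfl⟩ := hx
          simp only [LinearMap.add_apply, inner_add_left]
          rw [LinearMap.adjoint_inner_left]
          linarith [key i j, real_inner_comm (e i) (f (e j))]
        | zero => simp
        | add x y hx hy ihx ihy => rw [inner_add_right, ihx, ihy]; ring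
        | smul a x hx ihx => rw [inner_smul_right, ihx]; ring
      exact inner_self_eq_zero.mp (horth _)
    have : LinearMap.adjoint f + f = 0 := by
      apply b.ext
      intro i
      rw [hb i]
      simpa using hzero i
    linear_combination (norm := module) this
  refine ⟨Matrix.toEuclideanLin.symm f, ⟨?_, ?_⟩, ?_⟩
  · apply Matrix.toEuclideanLin.injective
    have h1 : (Matrix.toEuclideanLin.symm f : Matrix (Fin d) (Fin d) ℝ)ᵀ
        = (Matrix.toEuclideanLin.symm f : Matrix (Fin d) (Fin d) ℝ)ᴴ := by
      ext i j
      simp [Matrix.conjTranspose]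
    rw [h1, Matrix.toEuclideanLin_conjTranspose_eq_adjoint, map_neg]
    simp only [LinearEquiv.apply_symm_apply]
    exact hadj
  · intro i
    simp only [matAct, LinearEquiv.apply_symm_apply]
    rw [hfe i]
    abel
  · rintro Y ⟨-, hY⟩
    apply Matrix.toEuclideanLin.injective
    rw [LinearEquiv.apply_symm_apply]
    apply b.ext
    intro i
    rw [hb i, hfe i, hY i]
    simp [matAct]
end

section
/- Let a > 0 and let x_0, x_1, …, x_d ∈ ℝ^d be a d-dimensional cell, i.e. |x_i − x_j| = a for all 0 ≤ i < j ≤ d and the vectors x_1 − x_0, …, x_d − x_0 form a basis of ℝ^d. If h_0, h_1, …, h_d ∈ ℝ^d satisfy ⟨h_i − h_j, x_i − x_j⟩ = 0 for every 0 ≤ i < j ≤ d, then there exist a skew-symmetric d×d real matrix X and a vector v ∈ ℝ^d such that h_i = X x_i + v for every 0 ≤ i ≤ d. -/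
open Matrix

theorem stmt1 {d : ℕ} (a : ℝ) (ha : 0 < a)
    (x : Fin (d + 1) → EuclideanSpace ℝ (Fin d))
    (hdist : ∀ i j : Fin (d + 1), i < j → ‖x i - x j‖ = a)
    (hli : LinearIndependent ℝ (fun i : Fin d => x i.succ - x 0))
    (hsp : Submodule.span ℝ (Set.range fun i : Fin d => x i.succ - x 0) = ⊤)
    (h : Fin (d + 1) → EuclideanSpace ℝ (Fin d))
    (horth : ∀ i j : Fin (d + 1), i < j → (inner ℝ (h i - h j) (x i - x j) : ℝ) = 0) :
    ∃ (X : Matrix (Fin d) (Fin d) ℝ) (v : EuclideanSpace ℝ (Fin d)),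
      Xᵀ = -X ∧ ∀ i : Fin (d + 1), h i = matAct X (x i) + v := by
  classical
  let b : Module.Basis (Fin d) ℝ (EuclideanSpace ℝ (Fin d)) := Module.Basis.mk hli (by rw [hsp])
  have hb : ∀ i, b i = x i.succ - x 0 := fun i => Module.Basis.mk_apply hli _ i
  let A : EuclideanSpace ℝ (Fin d) →ₗ[ℝ] EuclideanSpace ℝ (Fin d) :=
    b.constr ℝ (fun i => h i.succ - h 0)
  have hAb : ∀ i, A (b i) = h i.succ - h 0 := fun i => b.constr_basis ℝ _ i
  -- diagonal skewness
  have key0 : ∀ i : Fin d, (inner ℝ (A (b i)) (b i) : ℝ) = 0 := by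
    intro i
    rw [hAb, hb]
    have := horth 0 i.succ (Fin.succ_pos i)
    rw [show h 0 - h i.succ = -(h i.succ - h 0) by abel,
        show x 0 - x i.succ = -(x i.succ - x 0) by abel, inner_neg_neg] at this
    exact this
  have key : ∀ i j : Fin d,
      (inner ℝ (A (b i)) (b j) : ℝ) + inner ℝ (A (b j)) (b i) = 0 := by
    have main : ∀ i j : Fin d, i < j →
        (inner ℝ (A (b i)) (b j) : ℝ) + inner ℝ (A (b j)) (b i) = 0 := by
      intro i j hij
      have hlt : i.succ < j.succ := Fin.succ_lt_succ_iff.mpr hij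
      have horth' := horth i.succ j.succ hlt
      have e1 : h i.succ - h j.succ = A (b i) - A (b j) := by
        rw [hAb, hAb]; abel
      have e2 : x i.succ - x j.succ = b i - b j := by
        rw [hb, hb]; abel
      rw [e1, e2] at horth'
      simp only [inner_sub_left, inner_sub_right] at horth'
      have k1 := key0 i
      have k2 := key0 j
      linarith
    intro i j
    rcases lt_trichotomy i j with hlt | heq | hgt
    · exact main i j hlt
    · subst heq; rw [key0]; ring
    · have := main j i hgt; linarith [this]
  -- bilinear extension
  let B : EuclideanSpace ℝ (Fin d) →ₗ[ℝ] EuclideanSpace ℝ (Fin d) →ₗ[ℝ] ℝ :=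
    LinearMap.mk₂ ℝ (fun u w => (inner ℝ (A u) w : ℝ) + inner ℝ (A w) u)
      (by intro u u' w
          simp only [LinearMap.map_add, inner_add_left, inner_add_right]; ring)
      (by intro c u w
          simp only [LinearMap.map_smul, inner_smul_left, inner_smul_right,
            conj_trivial, smul_eq_mul]; ring)
      (by intro u w w'
          simp only [LinearMap.map_add, inner_add_left, inner_add_right]; ring)
      (by intro c u w
          simp only [LinearMap.map_smul, inner_smul_left, inner_smul_right,
            conj_trivial, smul_eq_mul]; ring)
  have hB : B = 0 := b.ext fun i => b.ext fun j => by
    simpa [B, LinearMap.mk₂_apply] using key i j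
  have skew : ∀ u w : EuclideanSpace ℝ (Fin d),
      (inner ℝ (A u) w : ℝ) = - inner ℝ (A w) u := by
    intro u w
    have := congrFun (congrArg (fun f => fun u w => f u w) hB) u
    have h2 : (inner ℝ (A u) w : ℝ) + inner ℝ (A w) u = 0 := by
      have := congrArg (fun f => f w) (congrArg (fun f => f u) hB)
      simpa [B, LinearMap.mk₂_apply] using this
    linarith
  refine ⟨Matrix.toEuclideanLin.symm A, h 0 - A (x 0), ?_, ?_⟩
  · ext i j
    have entry : ∀ (M : Matrix (Fin d) (Fin d) ℝ) (i j : Fin d),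
        Matrix.toEuclideanLin M (EuclideanSpace.single j 1) i = M i j := by
      intro M i j
      rw [Matrix.toEuclideanLin_apply]
      show (M *ᵥ fun k => (EuclideanSpace.single j (1:ℝ)) k) i = M i j
      simp [EuclideanSpace.single, Matrix.mulVec, dotProduct, Pi.single_apply, mul_ite]
    set X := (Matrix.toEuclideanLin.symm A : Matrix (Fin d) (Fin d) ℝ) with hX
    have hXA : Matrix.toEuclideanLin X = A := Matrix.toEuclideanLin.apply_symm_apply A
    have eX : ∀ i j, X i j = (inner ℝ (A (EuclideanSpace.single j 1))
        (EuclideanSpace.single i (1:ℝ)) : ℝ) := by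
      intro i j
      rw [← hXA, ← entry X i j, hXA]
      rw [EuclideanSpace.inner_single_right]
      simp
    show X j i = (-X) i j
    rw [Matrix.neg_apply, eX, eX, skew]
  · intro i
    have hXA : Matrix.toEuclideanLin (Matrix.toEuclideanLin.symm A
        : Matrix (Fin d) (Fin d) ℝ) = A := Matrix.toEuclideanLin.apply_symm_apply A
    show h i = Matrix.toEuclideanLin _ (x i) + (h 0 - A (x 0))
    rw [hXA]
    induction i using Fin.cases with
    | zero => abel
    | succ j =>
      have : A (x j.succ - x 0) = h j.succ - h 0 := by rw [← hb, hAb]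
      rw [map_sub] at this
      have : A (x j.succ) = h j.succ - h 0 + A (x 0) := by
        rw [← this]; abel
      rw [this]; abel
end

section
/- Let S₁ and S₂ be finite subsets of ℝ^d that are both infinitesimally rigid with bond length a, and suppose that the affine hull of S₁ ∩ S₂ has dimension at least d − 1. Then S₁ ∪ S₂ is infinitesimally rigid with bond length a. -/
open Matrix
open scoped Classical

/-- A finite set `S ⊆ ℝ^d` is *infinitesimally rigid with bond length `a`* if every
assignment `h` of vectors to the points of `S` satisfying
`⟨h p − h q, p − q⟩ = 0` whenever `‖p − q‖ = a` is of the form `h p = X p + v`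
with `X` skew-symmetric. -/
def InfinitesimallyRigidSet {d : ℕ} (a : ℝ)
    (S : Finset (EuclideanSpace ℝ (Fin d))) : Prop :=
  ∀ h : EuclideanSpace ℝ (Fin d) → EuclideanSpace ℝ (Fin d),
    (∀ p ∈ S, ∀ q ∈ S, ‖p - q‖ = a → (inner ℝ (h p - h q) (p - q) : ℝ) = 0) →
    ∃ (X : Matrix (Fin d) (Fin d) ℝ) (v : EuclideanSpace ℝ (Fin d)),
      Xᵀ = -X ∧ ∀ p ∈ S, h p = matAct X p + v

/-- The dimension of the affine hull of a set, with the convention that the affine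
hull of the empty set has dimension `−1`. -/
noncomputable def affineHullDim {d : ℕ} (s : Set (EuclideanSpace ℝ (Fin d))) : ℤ :=
  if s.Nonempty then
    (Module.finrank ℝ (affineSpan ℝ s).direction : ℤ)
  else -1

theorem stmt3 {d : ℕ} (a : ℝ) (ha : 0 < a)
    (S₁ S₂ : Finset (EuclideanSpace ℝ (Fin d)))
    (h₁ : InfinitesimallyRigidSet a S₁) (h₂ : InfinitesimallyRigidSet a S₂)
    (hdim : (d : ℤ) - 1 ≤ affineHullDim ((S₁ ∩ S₂ : Finset _) : Set (EuclideanSpace ℝ (Fin d)))) :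
    InfinitesimallyRigidSet a (S₁ ∪ S₂) := by
  intro h hcon
  by_cases hne : ((S₁ ∩ S₂ : Finset _) : Set (EuclideanSpace ℝ (Fin d))).Nonempty
  case neg =>
    -- then d = 0 and the space is a subsingleton
    have hd : d = 0 := by
      unfold affineHullDim at hdim
      rw [if_neg hne] at hdim
      omega
    subst hd
    haveI : Subsingleton (EuclideanSpace ℝ (Fin 0)) :=
      ⟨fun a b => PiLp.ext fun i => i.elim0⟩
    exact ⟨0, 0, by simp, fun p _ => Subsingleton.elim _ _⟩
  case pos =>
    obtain ⟨X₁, v₁, hskew₁, hX₁⟩ := h₁ h (fun p hp q hq =>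
      hcon p (Finset.mem_union_left _ hp) q (Finset.mem_union_left _ hq))
    obtain ⟨X₂, v₂, hskew₂, hX₂⟩ := h₂ h (fun p hp q hq =>
      hcon p (Finset.mem_union_right _ hp) q (Finset.mem_union_right _ hq))
    set A : Matrix (Fin d) (Fin d) ℝ := X₁ - X₂ with hA
    set fA : EuclideanSpace ℝ (Fin d) →ₗ[ℝ] EuclideanSpace ℝ (Fin d) :=
      Matrix.toEuclideanLin A with hfA
    have hfsub : ∀ p : EuclideanSpace ℝ (Fin d), fA p = matAct X₁ p - matAct X₂ p := by
      intro p
      have : Matrix.toEuclideanLin (X₁ - X₂) =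
          Matrix.toEuclideanLin X₁ - Matrix.toEuclideanLin X₂ := map_sub _ _ _
      simp only [hfA, hA, this, LinearMap.sub_apply, matAct]
    -- skewness of fA
    have hadj : ∀ x y : EuclideanSpace ℝ (Fin d),
        (inner ℝ (fA x) y : ℝ) = - inner ℝ x (fA y) := by
      intro x y
      have hAH : Aᴴ = -A := by
        have h0 : Aᴴ = Aᵀ := by ext i j; simp [Matrix.conjTranspose_apply]
        rw [h0, hA, Matrix.transpose_sub, hskew₁, hskew₂]
        abel
      have h1 : LinearMap.adjoint fA = Matrix.toEuclideanLin (-A) := by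
        rw [← hAH, hfA, Matrix.toEuclideanLin_conjTranspose_eq_adjoint]
      have h2 : (inner ℝ x (fA y) : ℝ) = inner ℝ (LinearMap.adjoint fA x) y :=
        (LinearMap.adjoint_inner_left fA y x).symm
      rw [h2, h1, map_neg, LinearMap.neg_apply, inner_neg_left, neg_neg, ← hfA]
    -- fA is constant on the intersection
    have hfint : ∀ p ∈ S₁ ∩ S₂, fA p = v₂ - v₁ := by
      intro p hp
      have hp1 : p ∈ S₁ := (Finset.mem_inter.mp hp).1
      have hp2 : p ∈ S₂ := (Finset.mem_inter.mp hp).2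
      have e : matAct X₁ p + v₁ = matAct X₂ p + v₂ := (hX₁ p hp1).symm.trans (hX₂ p hp2)
      rw [hfsub, sub_eq_sub_iff_add_eq_add, e, add_comm]
    set W : Submodule ℝ (EuclideanSpace ℝ (Fin d)) :=
      vectorSpan ℝ ((S₁ ∩ S₂ : Finset _) : Set (EuclideanSpace ℝ (Fin d))) with hW
    have hWker : W ≤ LinearMap.ker fA := by
      rw [hW, vectorSpan_def, Submodule.span_le]
      rintro x hx
      obtain ⟨p, hp, q, hq, rfl⟩ := Set.mem_vsub.mp hx
      simp only [SetLike.mem_coe, LinearMap.mem_ker, vsub_eq_sub, map_sub]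
      rw [hfint p (by exact_mod_cast hp), hfint q (by exact_mod_cast hq), sub_self]
    -- dimension bound
    have hrank : (d : ℤ) - 1 ≤ (Module.finrank ℝ W : ℤ) := by
      unfold affineHullDim at hdim
      rw [if_pos hne, direction_affineSpan] at hdim
      exact hdim
    have hdimE : Module.finrank ℝ (EuclideanSpace ℝ (Fin d)) = d := by
      simp [finrank_euclideanSpace]
    have hsum : Module.finrank ℝ W + Module.finrank ℝ Wᗮ = d := by
      have h3 := W.finrank_add_finrank_orthogonal
      rw [hdimE] at h3
      exact h3
    have horthdim : Module.finrank ℝ Wᗮ ≤ 1 := by omega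
    obtain ⟨v₀, hv₀⟩ := finrank_le_one_iff.mp horthdim
    -- fA vanishes on the orthogonal complement
    have hker_orth : ∀ u : EuclideanSpace ℝ (Fin d), u ∈ Wᗮ → fA u = 0 := by
      intro u hu
      have hu1 : fA u ∈ Wᗮ := by
        rw [Submodule.mem_orthogonal]
        intro w hw
        have hfw : fA w = 0 := hWker hw
        have h4 := hadj w u
        rw [hfw, inner_zero_left] at h4
        linarith [h4]
      have hself : (inner ℝ (fA u) u : ℝ) = 0 := by
        have h1 := hadj u u
        have h2 : (inner ℝ u (fA u) : ℝ) = inner ℝ (fA u) u := real_inner_comm _ _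
        linarith [h1, h2]
      obtain ⟨c, hc⟩ := hv₀ ⟨u, hu⟩
      obtain ⟨c', hc'⟩ := hv₀ ⟨fA u, hu1⟩
      have hu' : c • (v₀ : EuclideanSpace ℝ (Fin d)) = u := congrArg Subtype.val hc
      have hfu' : c' • (v₀ : EuclideanSpace ℝ (Fin d)) = fA u := congrArg Subtype.val hc'
      by_cases hc'0 : c' = 0
      · rw [← hfu', hc'0, zero_smul]
      by_cases hv00 : (v₀ : EuclideanSpace ℝ (Fin d)) = 0
      · rw [← hfu', hv00, smul_zero]
      have hnorm : (inner ℝ (fA u) u : ℝ) =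
          c' * c * (inner ℝ (v₀ : EuclideanSpace ℝ (Fin d)) (v₀ : EuclideanSpace ℝ (Fin d))) := by
        rw [← hfu', ← hu', real_inner_smul_left, real_inner_smul_right]; ring
      have hv0pos : (0 : ℝ) <
          inner ℝ (v₀ : EuclideanSpace ℝ (Fin d)) (v₀ : EuclideanSpace ℝ (Fin d)) := by
        rw [real_inner_self_eq_norm_sq]
        exact pow_pos (norm_pos_iff.mpr hv00) 2
      have hc0 : c = 0 := by
        rw [hself] at hnorm
        rcases mul_eq_zero.mp hnorm.symm with h' | h'
        · rcases mul_eq_zero.mp h' with h'' | h''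
          · exact absurd h'' hc'0
          · exact h''
        · linarith
      have hu0 : u = 0 := by rw [← hu', hc0, zero_smul]
      rw [hu0, map_zero]
    -- fA = 0
    have hfA0 : ∀ x : EuclideanSpace ℝ (Fin d), fA x = 0 := by
      intro x
      have hx : x ∈ W ⊔ Wᗮ := by
        rw [Submodule.sup_orthogonal_of_hasOrthogonalProjection]; trivial
      obtain ⟨w, hw, u, hu, rfl⟩ := Submodule.mem_sup.mp hx
      rw [map_add, hker_orth u hu, LinearMap.mem_ker.mp (hWker hw), add_zero]
    -- v₂ = v₁
    obtain ⟨p₀, hp₀⟩ := hne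
    have hp₀' : p₀ ∈ S₁ ∩ S₂ := by exact_mod_cast hp₀
    have hv : v₂ = v₁ := by
      have h5 := hfint p₀ hp₀'
      rw [hfA0 p₀] at h5
      exact sub_eq_zero.mp h5.symm
    have hmat : ∀ p : EuclideanSpace ℝ (Fin d), matAct X₂ p = matAct X₁ p := by
      intro p
      have h6 := hfsub p
      rw [hfA0 p] at h6
      exact (sub_eq_zero.mp h6.symm).symm
    refine ⟨X₁, v₁, hskew₁, fun p hp => ?_⟩
    rcases Finset.mem_union.mp hp with hp' | hp'
    · exact hX₁ p hp'
    · rw [hX₂ p hp', hv, hmat]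
end

section
/- Fix c₁ > 0. There exists a constant C > 0, depending only on U, c₁ and d, such that for every N and every x = (x_i)_{i=1}^N ∈ (ℝ^d)^N with |x_i − x_j| ≥ c₁ for all i ≠ j, one has |Σ_{i=1}^N Δ_{x_i} H(x)| ≤ C N, where Δ_{x_i} denotes the Laplacian with respect to the d coordinates of x_i. -/
open Matrix

/-- The Hamiltonian H(x) = Σ_{1≤i<j≤N} U(|x_i − x_j|). -/
noncomputable def Ham {d N : ℕ} (U : ℝ → ℝ) (x : Fin N → EuclideanSpace ℝ (Fin d)) : ℝ :=
  ∑ i : Fin N, ∑ j : Fin N, if i < j then U ‖x i - x j‖ else 0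

/-- Δ_{x_i} H(x): the Laplacian of H with respect to the d coordinates of the i-th
particle, i.e. the sum over the coordinate directions α of the second derivative of H at
x along the α-th coordinate direction of the i-th particle. -/
noncomputable def lapHam {d N : ℕ} (U : ℝ → ℝ) (x : Fin N → EuclideanSpace ℝ (Fin d))
    (i : Fin N) : ℝ :=
  ∑ α : Fin d, iteratedDeriv 2
    (fun t : ℝ => Ham U (Function.update x i (x i + t • EuclideanSpace.single α (1 : ℝ)))) 0

/-! ### Auxiliary material -/

open MeasureTheory Metric Finset
open scoped ENNReal

/-- Packing bound: a `c`-separated family has a bounded number of points in any ball. -/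
lemma stmt11_packing {d : ℕ} (c ρ : ℝ) (hc : 0 < c) :
    ∃ K : ℝ, 0 ≤ K ∧ ∀ (N : ℕ) (x : Fin N → EuclideanSpace ℝ (Fin d)),
      (∀ i j : Fin N, i ≠ j → c ≤ ‖x i - x j‖) → ∀ i : Fin N,
      ((Finset.univ.filter fun j => ‖x i - x j‖ ≤ ρ).card : ℝ) ≤ K := by
  rcases le_or_gt ρ 0 with hρ | hρ
  · rcases lt_or_ge ρ 0 with hρ' | hρ'
    · refine ⟨0, le_refl _, fun N x hsep i => ?_⟩
      have : (Finset.univ.filter fun j => ‖x i - x j‖ ≤ ρ) = ∅ := by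
        refine Finset.filter_eq_empty_iff.2 fun j _ => ?_
        intro h
        exact absurd (le_trans (norm_nonneg _) h) (not_le.2 hρ')
      simp [this]
    · refine ⟨1, by norm_num, fun N x hsep i => ?_⟩
      have : (Finset.univ.filter fun j => ‖x i - x j‖ ≤ ρ) ⊆ {i} := by
        intro j hj
        simp only [Finset.mem_filter] at hj
        by_contra hji
        simp only [Finset.mem_singleton] at hji
        have := hsep i j (Ne.symm hji)
        have h0 : ‖x i - x j‖ ≤ 0 := le_trans hj.2 hρ
        linarith
      have := Finset.card_le_card this
      simp only [Finset.card_singleton] at this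
      exact_mod_cast this
  · set E := EuclideanSpace ℝ (Fin d)
    set μ : Measure E := volume
    set b : ℝ≥0∞ := μ (ball (0 : E) 1) with hb
    have hb0 : b ≠ 0 := (measure_ball_pos μ 0 one_pos).ne'
    have hbt : b ≠ ⊤ := measure_ball_lt_top.ne
    refine ⟨(ρ + c/3) ^ d / (c/3) ^ d, by positivity, fun N x hsep i => ?_⟩
    set S := Finset.univ.filter fun j => ‖x i - x j‖ ≤ ρ with hS
    have hdisj : (S : Set (Fin N)).PairwiseDisjoint
        (fun j => closedBall (x j) (c/3)) := by
      intro j _ k _ hjk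
      apply closedBall_disjoint_closedBall
      rw [dist_eq_norm]
      have := hsep j k hjk
      linarith
    have hsub : ∀ j ∈ S, closedBall (x j) (c/3) ⊆ closedBall (x i) (ρ + c/3) := by
      intro j hj y hy
      simp only [hS, Finset.mem_filter] at hj
      simp only [mem_closedBall] at hy ⊢
      have : dist y (x i) ≤ dist y (x j) + dist (x j) (x i) := dist_triangle _ _ _
      have h2 : dist (x j) (x i) ≤ ρ := by
        rw [dist_eq_norm, ← norm_neg]
        simpa using hj.2
      linarith
    have hmeas : μ (⋃ j ∈ S, closedBall (x j) (c/3)) = ∑ j ∈ S, μ (closedBall (x j) (c/3)) :=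
      measure_biUnion_finset hdisj fun j _ => measurableSet_closedBall
    have hle : ∑ j ∈ S, μ (closedBall (x j) (c/3)) ≤ μ (closedBall (x i) (ρ + c/3)) := by
      rw [← hmeas]
      exact measure_mono (Set.iUnion₂_subset hsub)
    have hcb : ∀ (y : E) (r : ℝ), 0 ≤ r →
        μ (closedBall y r) = ENNReal.ofReal (r ^ d) * b := by
      intro y r hr
      have h := Measure.addHaar_closedBall μ y hr
      rwa [finrank_euclideanSpace_fin] at h
    rw [Finset.sum_congr rfl (fun j _ => hcb (x j) (c/3) (by linarith)),
      Finset.sum_const, hcb (x i) (ρ + c/3) (by linarith), nsmul_eq_mul] at hle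
    rw [← mul_assoc] at hle
    have hle2 : (S.card : ℝ≥0∞) * ENNReal.ofReal ((c/3) ^ d) ≤ ENNReal.ofReal ((ρ + c/3) ^ d) :=
      (ENNReal.mul_le_mul_iff_left hb0 hbt).1 hle
    have hcast : (S.card : ℝ≥0∞) * ENNReal.ofReal ((c/3) ^ d)
        = ENNReal.ofReal (S.card * (c/3) ^ d) := by
      rw [ENNReal.ofReal_mul (by positivity)]
      congr 1
      simp [ENNReal.ofReal_natCast]
    rw [hcast] at hle2
    have hreal : (S.card : ℝ) * (c/3) ^ d ≤ (ρ + c/3) ^ d :=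
      (ENNReal.ofReal_le_ofReal_iff (by positivity)).1 hle2
    rw [← le_div_iff₀ (by positivity)] at hreal
    exact hreal

/-- Decomposition of the Hamiltonian after updating one particle. -/
lemma stmt11_ham_update {d N : ℕ} (U : ℝ → ℝ) (x : Fin N → EuclideanSpace ℝ (Fin d)) (i : Fin N)
    (y : EuclideanSpace ℝ (Fin d)) :
    Ham U (Function.update x i y) =
      (∑ j ∈ Finset.univ.erase i, U ‖y - x j‖) +
      ∑ i' ∈ Finset.univ.erase i, ∑ j' ∈ Finset.univ.erase i,
        if i' < j' then U ‖x i' - x j'‖ else 0 := by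
  classical
  set u := Function.update x i y with hu
  have hui : u i = y := Function.update_self i y x
  have huj : ∀ j, j ≠ i → u j = x j := fun j hj => Function.update_of_ne hj y x
  unfold Ham
  rw [← Finset.add_sum_erase Finset.univ _ (Finset.mem_univ i)]
  have h1 : (∑ j' : Fin N, if i < j' then U ‖u i - u j'‖ else 0)
      = ∑ j' : Fin N, if i < j' then U ‖y - x j'‖ else 0 := by
    refine Finset.sum_congr rfl fun j' _ => ?_
    by_cases h : i < j'
    · rw [if_pos h, if_pos h, hui, huj j' (ne_of_gt h)]
    · rw [if_neg h, if_neg h]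
  rw [h1]
  have h2 : ∀ i' ∈ Finset.univ.erase i,
      (∑ j' : Fin N, if i' < j' then U ‖u i' - u j'‖ else 0)
        = (if i' < i then U ‖y - x i'‖ else 0) +
          ∑ j' ∈ Finset.univ.erase i, if i' < j' then U ‖x i' - x j'‖ else 0 := by
    intro i' hi'
    have hi'i : i' ≠ i := Finset.ne_of_mem_erase hi'
    rw [← Finset.add_sum_erase Finset.univ _ (Finset.mem_univ i)]
    congr 1
    · by_cases h : i' < i
      · rw [if_pos h, if_pos h, hui, huj i' hi'i, norm_sub_rev]
      · rw [if_neg h, if_neg h]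
    · refine Finset.sum_congr rfl fun j' hj' => ?_
      have hj'i : j' ≠ i := Finset.ne_of_mem_erase hj'
      by_cases h : i' < j'
      · rw [if_pos h, if_pos h, huj i' hi'i, huj j' hj'i]
      · rw [if_neg h, if_neg h]
  rw [Finset.sum_congr rfl h2, Finset.sum_add_distrib]
  have h3 : (∑ j' : Fin N, if i < j' then U ‖y - x j'‖ else 0)
      + (∑ i' ∈ Finset.univ.erase i, if i' < i then U ‖y - x i'‖ else 0)
      = ∑ j ∈ Finset.univ.erase i, U ‖y - x j‖ := by
    rw [← Finset.sum_erase (f := fun j' => if i < j' then U ‖y - x j'‖ else 0) (a := i)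
      Finset.univ (by simp), ← Finset.sum_add_distrib]
    refine Finset.sum_congr rfl fun j hj => ?_
    have hji : j ≠ i := Finset.ne_of_mem_erase hj
    rcases lt_or_gt_of_ne hji with h | h
    · rw [if_neg (by exact fun hh => absurd (lt_trans h hh) (lt_irrefl _)), if_pos h, zero_add]
    · rw [if_pos h, if_neg (by exact fun hh => absurd (lt_trans h hh) (lt_irrefl _)), add_zero]
  rw [← add_assoc, h3]

/-- First derivative of `t ↦ U ‖v + t w‖`. -/
noncomputable def stmt11D1 {d : ℕ} (U : ℝ → ℝ) (v w : EuclideanSpace ℝ (Fin d)) (t : ℝ) : ℝ :=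
  deriv U ‖v + t • w‖ * (((inner ℝ v w : ℝ) + t) / ‖v + t • w‖)

/-- Second derivative of `t ↦ U ‖v + t w‖` at `t = 0`. -/
noncomputable def stmt11E2 {d : ℕ} (U : ℝ → ℝ) (v w : EuclideanSpace ℝ (Fin d)) : ℝ :=
  deriv (deriv U) ‖v‖ * ((inner ℝ v w : ℝ) / ‖v‖) ^ 2
    + deriv U ‖v‖ * (1 / ‖v‖ - (inner ℝ v w : ℝ) ^ 2 / ‖v‖ ^ 3)

lemma stmt11_sq_norm_eq_q {d : ℕ} (v w : EuclideanSpace ℝ (Fin d)) (hw : ‖w‖ = 1) (t : ℝ) :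
    ‖v + t • w‖ ^ 2 = ‖v‖ ^ 2 + 2 * (inner ℝ v w : ℝ) * t + t ^ 2 := by
  rw [norm_add_sq_real, real_inner_smul_right, norm_smul, hw]
  norm_num [Real.norm_eq_abs, sq_abs, mul_pow]
  ring

lemma stmt11_norm_eq_sqrt_q {d : ℕ} (v w : EuclideanSpace ℝ (Fin d)) (hw : ‖w‖ = 1) (t : ℝ) :
    ‖v + t • w‖ = Real.sqrt (‖v‖ ^ 2 + 2 * (inner ℝ v w : ℝ) * t + t ^ 2) := by
  rw [← stmt11_sq_norm_eq_q v w hw t, Real.sqrt_sq (norm_nonneg _)]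

lemma stmt11_hasDerivAt_q (c₀ c : ℝ) (t : ℝ) :
    HasDerivAt (fun s : ℝ => c₀ + 2 * c * s + s ^ 2) (2 * c + 2 * t) t := by
  have h := ((hasDerivAt_id t).const_mul (2 * c)).add (hasDerivAt_pow 2 t)
  have h2 := (hasDerivAt_const t c₀).add h
  convert h2 using 1
  · rfl
  · rfl
  · funext s
    simp only [id, Pi.add_apply]
    ring
  · push_cast
    ring

lemma stmt11_keyA {d : ℕ} (U : ℝ → ℝ) (hU : Differentiable ℝ U)
    (v w : EuclideanSpace ℝ (Fin d)) (hw : ‖w‖ = 1) (t : ℝ) (hpos : 0 < ‖v + t • w‖) :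
    HasDerivAt (fun s : ℝ => U ‖v + s • w‖) (stmt11D1 U v w t) t := by
  obtain ⟨a, ha⟩ : ∃ a : ℝ, (inner ℝ v w : ℝ) = a := ⟨_, rfl⟩
  obtain ⟨r, hrv⟩ : ∃ r : ℝ, ‖v‖ = r := ⟨_, rfl⟩
  set q : ℝ → ℝ := fun s => r ^ 2 + 2 * a * s + s ^ 2 with hq
  have hnorm : ∀ s : ℝ, ‖v + s • w‖ = Real.sqrt (q s) := fun s => by
    rw [stmt11_norm_eq_sqrt_q v w hw s, ha, hrv]
  have hqt0 : q t ≠ 0 := by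
    have h2 : q t = ‖v + t • w‖ ^ 2 := by rw [stmt11_sq_norm_eq_q v w hw t, ha, hrv]
    rw [h2]
    positivity
  have hsq : HasDerivAt (fun s => Real.sqrt (q s))
      (1 / (2 * Real.sqrt (q t)) * (2 * a + 2 * t)) t :=
    (Real.hasDerivAt_sqrt hqt0).comp t (stmt11_hasDerivAt_q _ _ t)
  have hcomp : HasDerivAt (fun s => U (Real.sqrt (q s)))
      (deriv U (Real.sqrt (q t)) * (1 / (2 * Real.sqrt (q t)) * (2 * a + 2 * t))) t :=
    (hU (Real.sqrt (q t))).hasDerivAt.comp t hsq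
  have hfun : (fun s : ℝ => U ‖v + s • w‖) = fun s => U (Real.sqrt (q s)) := by
    funext s
    rw [hnorm s]
  have hD1 : stmt11D1 U v w t = deriv U (Real.sqrt (q t)) * ((a + t) / Real.sqrt (q t)) := by
    rw [stmt11D1, hnorm t, ha]
  have hst0 : Real.sqrt (q t) ≠ 0 := by
    rw [← hnorm t]
    exact ne_of_gt hpos
  rw [hfun, hD1]
  convert hcomp using 1
  field_simp

lemma stmt11_keyB {d : ℕ} (U : ℝ → ℝ) (hU : Differentiable ℝ (deriv U))
    (v w : EuclideanSpace ℝ (Fin d)) (hw : ‖w‖ = 1) (hv : 0 < ‖v‖) :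
    HasDerivAt (stmt11D1 U v w) (stmt11E2 U v w) 0 := by
  obtain ⟨a, ha⟩ : ∃ a : ℝ, (inner ℝ v w : ℝ) = a := ⟨_, rfl⟩
  obtain ⟨r, hrv⟩ : ∃ r : ℝ, ‖v‖ = r := ⟨_, rfl⟩
  rw [hrv] at hv
  have hr0 : r ≠ 0 := ne_of_gt hv
  set q : ℝ → ℝ := fun s => r ^ 2 + 2 * a * s + s ^ 2 with hq
  have hnorm : ∀ s : ℝ, ‖v + s • w‖ = Real.sqrt (q s) := fun s => by
    rw [stmt11_norm_eq_sqrt_q v w hw s, ha, hrv]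
  have hq0 : q 0 = r ^ 2 := by simp [hq]
  have hq0' : q 0 ≠ 0 := by rw [hq0]; positivity
  have hsq0 : Real.sqrt (q 0) = r := by
    rw [hq0, Real.sqrt_sq (le_of_lt hv)]
  have hsq : HasDerivAt (fun s => Real.sqrt (q s)) (a / r) 0 := by
    have h := (Real.hasDerivAt_sqrt hq0').comp 0 (stmt11_hasDerivAt_q _ _ 0)
    convert h using 1
    · rfl
    · rfl
    · rfl
    rw [hsq0]
    field_simp
    ring
  have hA : HasDerivAt (fun s => deriv U (Real.sqrt (q s)))
      (deriv (deriv U) r * (a / r)) 0 := by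
    have h := (hU (Real.sqrt (q 0))).hasDerivAt.comp 0 hsq
    rwa [hsq0] at h
  have hinv : HasDerivAt (fun s => (Real.sqrt (q s))⁻¹) (-(a / r) / r ^ 2) 0 := by
    have h := hsq.inv (by rw [hsq0]; exact hr0)
    rwa [hsq0] at h
  have hB : HasDerivAt (fun s => (a + s) * (Real.sqrt (q s))⁻¹)
      (1 * r⁻¹ + (a + 0) * (-(a / r) / r ^ 2)) 0 := by
    have hAdd : HasDerivAt (fun s : ℝ => a + s) 1 0 := (hasDerivAt_id 0).const_add a
    have h := hAdd.mul hinv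
    rwa [hsq0] at h
  have h := hA.mul hB
  have hfun : stmt11D1 U v w = fun s => deriv U (Real.sqrt (q s))
      * ((a + s) * (Real.sqrt (q s))⁻¹) := by
    funext s
    rw [stmt11D1, hnorm s, div_eq_mul_inv, ha]
  have hE : stmt11E2 U v w = deriv (deriv U) r * (a / r) ^ 2
      + deriv U r * (1 / r - a ^ 2 / r ^ 3) := by
    rw [stmt11E2, ha, hrv]
  rw [hfun, hE]
  convert h using 1
  · rfl
  · rfl
  · rfl
  rw [hsq0]
  field_simp
  ring

lemma stmt11_E2_bound {d : ℕ} (U : ℝ → ℝ) (M c₁ : ℝ) (hM' : ∀ s, |deriv U s| ≤ M)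
    (hM'' : ∀ s, |deriv (deriv U) s| ≤ M) (hc₁ : 0 < c₁)
    (v w : EuclideanSpace ℝ (Fin d)) (hw : ‖w‖ = 1) (hv : c₁ ≤ ‖v‖) :
    |stmt11E2 U v w| ≤ M + 2 * M / c₁ := by
  obtain ⟨a, ha⟩ : ∃ a : ℝ, (inner ℝ v w : ℝ) = a := ⟨_, rfl⟩
  obtain ⟨r, hrv⟩ : ∃ r : ℝ, ‖v‖ = r := ⟨_, rfl⟩
  rw [hrv] at hv
  have hr : 0 < r := lt_of_lt_of_le hc₁ hv
  have hM0 : 0 ≤ M := le_trans (abs_nonneg _) (hM' 0)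
  have har : |a| ≤ r := by
    rw [← ha]
    calc |(inner ℝ v w : ℝ)| ≤ ‖v‖ * ‖w‖ := abs_real_inner_le_norm v w
    _ = r := by rw [hw, hrv, mul_one]
  have ha2 : a ^ 2 ≤ r ^ 2 := by nlinarith [abs_nonneg a, sq_abs a]
  have h1 : (a / r) ^ 2 ≤ 1 := by
    rw [div_pow, div_le_one (by positivity)]
    exact ha2
  have hy : a ^ 2 / r ^ 3 ≤ 1 / r := by
    rw [div_le_div_iff₀ (by positivity) hr]
    nlinarith
  have h2 : |1 / r - a ^ 2 / r ^ 3| ≤ 2 / r := by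
    have hz : 0 ≤ a ^ 2 / r ^ 3 := by positivity
    have h1r : 0 < 1 / r := by positivity
    have h2r : 2 / r = 2 * (1 / r) := by ring
    rw [abs_le]
    constructor
    · linarith
    · linarith
  have h3 : 2 / r ≤ 2 / c₁ := by gcongr
  have hE : stmt11E2 U v w = deriv (deriv U) r * (a / r) ^ 2
      + deriv U r * (1 / r - a ^ 2 / r ^ 3) := by
    rw [stmt11E2, ha, hrv]
  rw [hE]
  calc |deriv (deriv U) r * (a / r) ^ 2 + deriv U r * (1 / r - a ^ 2 / r ^ 3)|
      ≤ |deriv (deriv U) r * (a / r) ^ 2| + |deriv U r * (1 / r - a ^ 2 / r ^ 3)| :=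
        abs_add_le _ _
    _ = |deriv (deriv U) r| * |(a / r) ^ 2| + |deriv U r| * |1 / r - a ^ 2 / r ^ 3| := by
        rw [abs_mul, abs_mul]
    _ ≤ M * 1 + M * (2 / c₁) := by
        apply add_le_add
        · exact mul_le_mul (hM'' r) (by rw [abs_of_nonneg (sq_nonneg _)]; exact h1)
            (abs_nonneg _) hM0
        · exact mul_le_mul (hM' r) (h2.trans h3) (abs_nonneg _) hM0
    _ = M + 2 * M / c₁ := by ring

lemma stmt11_E2_zero {d : ℕ} (U : ℝ → ℝ) (R : ℝ)
    (hR : ∀ s : ℝ, R ≤ s → deriv U s = 0 ∧ deriv (deriv U) s = 0)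
    (v w : EuclideanSpace ℝ (Fin d)) (hv : R ≤ ‖v‖) :
    stmt11E2 U v w = 0 := by
  rw [stmt11E2, (hR _ hv).1, (hR _ hv).2]
  ring

/-- The second-derivative formula for the Hamiltonian along a coordinate direction. -/
lemma stmt11_lap_formula {d N : ℕ} (U : ℝ → ℝ) (c₁ : ℝ)
    (hU : Differentiable ℝ U) (hU' : Differentiable ℝ (deriv U)) (hc₁ : 0 < c₁)
    (x : Fin N → EuclideanSpace ℝ (Fin d))
    (hsep : ∀ i j : Fin N, i ≠ j → c₁ ≤ ‖x i - x j‖) (i : Fin N) (α : Fin d) :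
    iteratedDeriv 2
      (fun t : ℝ => Ham U (Function.update x i (x i + t • EuclideanSpace.single α (1 : ℝ)))) 0
      = ∑ j ∈ Finset.univ.erase i, stmt11E2 U (x i - x j) (EuclideanSpace.single α 1) := by
  set w : EuclideanSpace ℝ (Fin d) := EuclideanSpace.single α 1 with hwdef
  have hw : ‖w‖ = 1 := by
    rw [hwdef, EuclideanSpace.norm_single]
    norm_num
  set Cc : ℝ := ∑ i' ∈ Finset.univ.erase i, ∑ j' ∈ Finset.univ.erase i,
      if i' < j' then U ‖x i' - x j'‖ else 0 with hCc
  have hF : (fun t : ℝ => Ham U (Function.update x i (x i + t • w)))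
      = fun t => (∑ j ∈ Finset.univ.erase i, U ‖(x i - x j) + t • w‖) + Cc := by
    funext t
    rw [stmt11_ham_update U x i (x i + t • w), ← hCc]
    congr 1
    refine Finset.sum_congr rfl fun j _ => ?_
    congr 1
    abel_nf
  have hvj : ∀ j ∈ Finset.univ.erase i, c₁ ≤ ‖x i - x j‖ := fun j hj =>
    hsep i j (Ne.symm (Finset.ne_of_mem_erase hj))
  have hpos : ∀ (j : Fin N) (t : ℝ), j ∈ Finset.univ.erase i → |t| < c₁ →
      0 < ‖(x i - x j) + t • w‖ := by
    intro j t hj ht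
    have h1 : ‖x i - x j‖ ≤ ‖(x i - x j) + t • w‖ + ‖t • w‖ := by
      calc ‖x i - x j‖ = ‖((x i - x j) + t • w) - t • w‖ := by rw [add_sub_cancel_right]
      _ ≤ ‖(x i - x j) + t • w‖ + ‖t • w‖ := norm_sub_le _ _
    have h2 : ‖t • w‖ = |t| := by rw [norm_smul, hw, Real.norm_eq_abs, mul_one]
    have := hvj j hj
    linarith
  have hDF : ∀ t ∈ Metric.ball (0 : ℝ) c₁,
      HasDerivAt (fun t => (∑ j ∈ Finset.univ.erase i, U ‖(x i - x j) + t • w‖) + Cc)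
        (∑ j ∈ Finset.univ.erase i, stmt11D1 U (x i - x j) w t) t := by
    intro t ht
    rw [Metric.mem_ball, Real.dist_eq, sub_zero] at ht
    exact (HasDerivAt.fun_sum fun j hj =>
      stmt11_keyA U hU (x i - x j) w hw t (hpos j t hj ht)).add_const Cc
  rw [show (2 : ℕ) = 1 + 1 from rfl, iteratedDeriv_succ, iteratedDeriv_one, hF]
  have hev : deriv (fun t => (∑ j ∈ Finset.univ.erase i, U ‖(x i - x j) + t • w‖) + Cc)
      =ᶠ[nhds (0 : ℝ)] fun t => ∑ j ∈ Finset.univ.erase i, stmt11D1 U (x i - x j) w t := by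
    filter_upwards [Metric.ball_mem_nhds (0 : ℝ) hc₁] with t ht
    exact (hDF t ht).deriv
  rw [hev.deriv_eq]
  exact (HasDerivAt.fun_sum fun j hj => stmt11_keyB U hU' (x i - x j) w hw
    (lt_of_lt_of_le hc₁ (hvj j hj))).deriv
theorem stmt11 {d : ℕ} (U : ℝ → ℝ) (c₁ : ℝ)
    (hU : ContDiff ℝ 3 U) (hUsupp : HasCompactSupport U) (hUeven : ∀ r, U (-r) = U r)
    (hc₁ : 0 < c₁) :
    ∃ C : ℝ, 0 < C ∧
      ∀ (N : ℕ) (x : Fin N → EuclideanSpace ℝ (Fin d)),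
        (∀ i j : Fin N, i ≠ j → c₁ ≤ ‖x i - x j‖) →
        |∑ i : Fin N, lapHam U x i| ≤ C * N := by
  classical
  -- regularity facts
  have hUdiff : Differentiable ℝ U := hU.differentiable (by norm_num)
  have hd1 : ContDiff ℝ 2 (deriv U) := by
    have h := ContDiff.iterate_deriv' 2 1 (f := U) (by exact_mod_cast hU)
    simpa using h
  have hUdiff' : Differentiable ℝ (deriv U) := hd1.differentiable (by norm_num)
  have hd2 : ContDiff ℝ 1 (deriv (deriv U)) := by
    have h := ContDiff.iterate_deriv' 1 1 (f := deriv U) (by exact_mod_cast hd1)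
    simpa using h
  have hs1 : HasCompactSupport (deriv U) := hUsupp.deriv
  have hs2 : HasCompactSupport (deriv (deriv U)) := hs1.deriv
  obtain ⟨M₁, hM₁⟩ := hs1.exists_bound_of_continuous hd1.continuous
  obtain ⟨M₂, hM₂⟩ := hs2.exists_bound_of_continuous hd2.continuous
  set M : ℝ := max (max M₁ M₂) 0 with hM
  have hM' : ∀ s, |deriv U s| ≤ M := fun s => by
    have := hM₁ s
    rw [Real.norm_eq_abs] at this
    exact this.trans (le_max_of_le_left (le_max_left _ _))
  have hM'' : ∀ s, |deriv (deriv U) s| ≤ M := fun s => by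
    have := hM₂ s
    rw [Real.norm_eq_abs] at this
    exact this.trans (le_max_of_le_left (le_max_right _ _))
  have hM0 : 0 ≤ M := le_max_right _ _
  -- support radius
  obtain ⟨R₀, hR₀⟩ := hUsupp.isBounded.subset_closedBall (0 : ℝ)
  set R : ℝ := max R₀ 0 + 1 with hRdef
  have hR1 : 0 < R := by positivity
  have hzero : ∀ s : ℝ, R ≤ s → deriv U s = 0 ∧ deriv (deriv U) s = 0 := by
    intro s hs
    have hR₀s : R₀ < s := lt_of_lt_of_le (by rw [hRdef]; nlinarith [le_max_left R₀ (0:ℝ)]) hs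
    have hev : U =ᶠ[nhds s] fun _ => 0 := by
      filter_upwards [Ioi_mem_nhds hR₀s] with u hu
      by_contra h
      have hmem : u ∈ tsupport U := subset_tsupport U (by simpa using h)
      have := hR₀ hmem
      rw [Metric.mem_closedBall, Real.dist_eq, sub_zero] at this
      have : u ≤ R₀ := le_trans (le_abs_self u) this
      exact absurd this (not_le.2 hu)
    have h1 : deriv U =ᶠ[nhds s] fun _ => 0 := by
      have := hev.deriv
      simpa using this
    refine ⟨h1.eq_of_nhds, ?_⟩
    have h2 : deriv (deriv U) =ᶠ[nhds s] fun _ => 0 := by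
      have := h1.deriv
      simpa using this
    exact h2.eq_of_nhds
  -- packing constant
  obtain ⟨K, hK0, hK⟩ := stmt11_packing (d := d) c₁ R hc₁
  set Bc : ℝ := M + 2 * M / c₁ with hBcdef
  have hBc0 : 0 ≤ Bc := by
    rw [hBcdef]
    positivity
  refine ⟨d * (Bc * K) + 1, by positivity, fun N x hsep => ?_⟩
  -- per-particle bound
  have hper : ∀ i : Fin N, |lapHam U x i| ≤ d * (Bc * K) := by
    intro i
    have hform : lapHam U x i = ∑ α : Fin d, ∑ j ∈ Finset.univ.erase i,
        stmt11E2 U (x i - x j) (EuclideanSpace.single α 1) := by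
      unfold lapHam
      exact Finset.sum_congr rfl fun α _ =>
        stmt11_lap_formula U c₁ hUdiff hUdiff' hc₁ x hsep i α
    rw [hform]
    have hinner : ∀ α : Fin d, |∑ j ∈ Finset.univ.erase i,
        stmt11E2 U (x i - x j) (EuclideanSpace.single α 1)| ≤ Bc * K := by
      intro α
      have hw : ‖(EuclideanSpace.single α (1:ℝ) : EuclideanSpace ℝ (Fin d))‖ = 1 := by
        rw [EuclideanSpace.norm_single]
        norm_num
      calc |∑ j ∈ Finset.univ.erase i, stmt11E2 U (x i - x j) (EuclideanSpace.single α 1)|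
          ≤ ∑ j ∈ Finset.univ.erase i, |stmt11E2 U (x i - x j) (EuclideanSpace.single α 1)| :=
            Finset.abs_sum_le_sum_abs _ _
        _ = ∑ j ∈ (Finset.univ.erase i).filter (fun j => ‖x i - x j‖ ≤ R),
              |stmt11E2 U (x i - x j) (EuclideanSpace.single α 1)|
            + ∑ j ∈ (Finset.univ.erase i).filter (fun j => ¬ ‖x i - x j‖ ≤ R),
              |stmt11E2 U (x i - x j) (EuclideanSpace.single α 1)| :=
            (Finset.sum_filter_add_sum_filter_not _ _ _).symm
        _ ≤ ∑ j ∈ (Finset.univ.erase i).filter (fun j => ‖x i - x j‖ ≤ R), Bc + 0 := by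
            apply add_le_add
            · exact Finset.sum_le_sum fun j hj => stmt11_E2_bound U M c₁ hM' hM'' hc₁ _ _ hw
                (hsep i j (Ne.symm (Finset.ne_of_mem_erase (Finset.mem_of_mem_filter j hj))))
            · apply le_of_eq
              apply Finset.sum_eq_zero
              intro j hj
              have hj2 : R ≤ ‖x i - x j‖ := le_of_not_ge (Finset.mem_filter.1 hj).2
              rw [stmt11_E2_zero U R hzero _ _ hj2, abs_zero]
        _ = ((Finset.univ.erase i).filter (fun j => ‖x i - x j‖ ≤ R)).card * Bc := by
            rw [Finset.sum_const, add_zero, nsmul_eq_mul]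
        _ ≤ K * Bc := by
            apply mul_le_mul_of_nonneg_right _ hBc0
            have hsub : ((Finset.univ.erase i).filter (fun j => ‖x i - x j‖ ≤ R)).card
                ≤ ((Finset.univ).filter (fun j => ‖x i - x j‖ ≤ R)).card :=
              Finset.card_le_card (Finset.filter_subset_filter _ (Finset.erase_subset _ _))
            calc (((Finset.univ.erase i).filter (fun j => ‖x i - x j‖ ≤ R)).card : ℝ)
                ≤ (((Finset.univ).filter (fun j => ‖x i - x j‖ ≤ R)).card : ℝ) := by
                  exact_mod_cast hsub
              _ ≤ K := hK N x hsep i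
        _ = Bc * K := mul_comm _ _
    calc |∑ α : Fin d, ∑ j ∈ Finset.univ.erase i,
          stmt11E2 U (x i - x j) (EuclideanSpace.single α 1)|
        ≤ ∑ α : Fin d, |∑ j ∈ Finset.univ.erase i,
          stmt11E2 U (x i - x j) (EuclideanSpace.single α 1)| := Finset.abs_sum_le_sum_abs _ _
      _ ≤ ∑ _α : Fin d, Bc * K := Finset.sum_le_sum fun α _ => hinner α
      _ = d * (Bc * K) := by rw [Finset.sum_const, nsmul_eq_mul, Finset.card_univ,
            Fintype.card_fin]
  calc |∑ i : Fin N, lapHam U x i| ≤ ∑ i : Fin N, |lapHam U x i| :=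
        Finset.abs_sum_le_sum_abs _ _
    _ ≤ ∑ _i : Fin N, d * (Bc * K) := Finset.sum_le_sum fun i _ => hper i
    _ = N * (d * (Bc * K)) := by rw [Finset.sum_const, nsmul_eq_mul, Finset.card_univ,
          Fintype.card_fin]
    _ ≤ (d * (Bc * K) + 1) * N := by
        have hN : (0:ℝ) ≤ N := Nat.cast_nonneg N
        have hQ : (0:ℝ) ≤ d * (Bc * K) := by positivity
        nlinarith
end

section
/- Let z = (z_i)_{i=1}^N ∈ (ℝ^d)^N with Σ_{i=1}^N z_i = 0 and let x = (x_i)_{i=1}^N ∈ (ℝ^d)^N. If (θ₀, η₀) ∈ SO(d) × ℝ^d minimizes the function (θ, η) ↦ Σ_{i=1}^N |x_i − θ z_i − η|² over SO(d) × ℝ^d, then the d×d matrix Q(x) θ₀ is symmetric, where Q(x) has entries q^{αβ}(x) = Σ_{i=1}^N z_i^α x_i^β. -/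
open Matrix
open scoped RealInnerProductSpace

/-- Membership in the special orthogonal group SO(d). -/
def IsSO {d : ℕ} (θ : Matrix (Fin d) (Fin d) ℝ) : Prop :=
  θ * θᵀ = 1 ∧ θ.det = 1

/-- The matrix Q(x) with entries q^{αβ}(x) = Σ_i z_i^α x_i^β. -/
noncomputable def Qmat {d N : ℕ} (z x : Fin N → EuclideanSpace ℝ (Fin d)) :
    Matrix (Fin d) (Fin d) ℝ :=
  fun α β => ∑ i : Fin N, z i α * x i β

lemma matAct_inner {d : ℕ} (θ : Matrix (Fin d) (Fin d) ℝ) (h : θ * θᵀ = 1)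
    (u v : EuclideanSpace ℝ (Fin d)) :
    ⟪matAct θ u, matAct θ v⟫ = ⟪u, v⟫ := by
  have h2 : θᵀ * θ = 1 := mul_eq_one_comm.mp h
  have key : ∀ w : EuclideanSpace ℝ (Fin d), matAct θ w = (θ *ᵥ (w : Fin d → ℝ) : Fin d → ℝ) :=
    fun _ => rfl
  simp only [PiLp.inner_apply, RCLike.inner_apply, starRingEnd_apply, star_trivial, key]
  show (θ *ᵥ (v : Fin d → ℝ)) ⬝ᵥ (θ *ᵥ (u : Fin d → ℝ)) = (v : Fin d → ℝ) ⬝ᵥ (u : Fin d → ℝ)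
  rw [Matrix.dotProduct_mulVec, ← Matrix.vecMul_transpose, Matrix.vecMul_vecMul, h2,
    Matrix.vecMul_one]

lemma inner_sum_eq {d N : ℕ} (z x : Fin N → EuclideanSpace ℝ (Fin d))
    (hz : ∑ i : Fin N, z i = 0) (θ : Matrix (Fin d) (Fin d) ℝ) (η : EuclideanSpace ℝ (Fin d)) :
    ∑ i : Fin N, ⟪x i - η, matAct θ (z i)⟫ = Matrix.trace (Qmat z x * θ) := by
  have hzc : ∀ β, ∑ i : Fin N, z i β = 0 := by
    intro β
    have h1 : (∑ i : Fin N, z i) β = (0 : EuclideanSpace ℝ (Fin d)) β := by rw [hz]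
    rw [show (∑ i : Fin N, z i) β = ∑ i : Fin N, z i β by simp] at h1
    simpa using h1
  have hact : ∀ w : EuclideanSpace ℝ (Fin d), ∀ α, matAct θ w α = ∑ β, θ α β * w β :=
    fun _ _ => rfl
  have hR : Matrix.trace (Qmat z x * θ)
      = ∑ α : Fin d, ∑ β : Fin d, θ α β * ∑ i : Fin N, z i β * x i α := by
    rw [Matrix.trace]
    simp only [Matrix.diag_apply, Matrix.mul_apply, Qmat]
    rw [Finset.sum_comm]
    exact Finset.sum_congr rfl fun a _ => Finset.sum_congr rfl fun b _ => mul_comm _ _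
  rw [hR]
  simp only [PiLp.inner_apply, RCLike.inner_apply, starRingEnd_apply, star_trivial, hact,
    PiLp.sub_apply, Finset.sum_mul]
  rw [Finset.sum_comm]
  refine Finset.sum_congr rfl fun α _ => ?_
  rw [Finset.sum_comm]
  refine Finset.sum_congr rfl fun β _ => ?_
  have hterm : ∀ i : Fin N, θ α β * z i β * (x i α - η α)
      = θ α β * (z i β * x i α) - (η α * θ α β) * z i β := fun i => by ring
  simp only [hterm]
  rw [Finset.sum_sub_distrib, ← Finset.mul_sum, ← Finset.mul_sum, hzc]
  ring

/-- A rotation by angle `t` in the `(α, β)` coordinate plane. -/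
noncomputable def rotM {d : ℕ} (α β : Fin d) (t : ℝ) : Matrix (Fin d) (Fin d) ℝ :=
  1 + (Real.cos t - 1) • (single α α (1 : ℝ) + single β β (1 : ℝ))
    + Real.sin t • (single β α (1 : ℝ) - single α β (1 : ℝ))

lemma transpose_single' {d : ℕ} (i j : Fin d) (c : ℝ) :
    (single i j c)ᵀ = single j i c := by
  ext a b
  simp only [Matrix.transpose_apply, single, Matrix.of_apply]
  by_cases h1 : i = b <;> by_cases h2 : j = a <;> simp [h1, h2]

lemma rotM_zero {d : ℕ} (α β : Fin d) : rotM α β 0 = 1 := by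
  simp [rotM]

lemma rotM_mul_transpose {d : ℕ} {α β : Fin d} (h : α ≠ β) (t : ℝ) :
    rotM α β t * (rotM α β t)ᵀ = 1 := by
  set c := Real.cos t with hc
  set s := Real.sin t with hs
  set P : Matrix (Fin d) (Fin d) ℝ := single α α (1 : ℝ) + single β β 1 with hP
  set J : Matrix (Fin d) (Fin d) ℝ := single β α (1 : ℝ) - single α β 1 with hJ
  have hPP : P * P = P := by
    simp [hP, add_mul, mul_add, Matrix.single_mul_single_same,
      h, h.symm]
  have hJJ : J * J = -P := by
    simp [hJ, hP, sub_mul, mul_sub, Matrix.single_mul_single_same,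
      h, h.symm]
    try abel
  have hPJ : P * J = J := by
    simp [hP, hJ, add_mul, mul_sub, Matrix.single_mul_single_same,
      h, h.symm]
    try abel
  have hJP : J * P = J := by
    simp [hP, hJ, sub_mul, mul_add, Matrix.single_mul_single_same,
      h, h.symm]
    try abel
  have hPt : Pᵀ = P := by
    simp [hP, Matrix.transpose_add, transpose_single']
  have hJt : Jᵀ = -J := by
    simp [hJ, Matrix.transpose_sub, transpose_single']
    try abel
  have hRt : (rotM α β t)ᵀ = 1 + (c - 1) • P - s • J := by
    simp [rotM, Matrix.transpose_add, Matrix.transpose_smul, hPt, hJt, ← hc, ← hs, ← hP, ← hJ,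
      smul_neg]
    try abel
  have hR : rotM α β t = 1 + (c - 1) • P + s • J := rfl
  rw [hRt, hR]
  have hcs : s * s = 1 - c * c := by
    have := Real.sin_sq_add_cos_sq t
    nlinarith [this]
  simp only [mul_add, mul_sub, add_mul, sub_mul, Matrix.smul_mul, Matrix.mul_smul, one_mul,
    mul_one, hPP, hJJ, hPJ, hJP, smul_smul, smul_neg]
  rw [hcs]
  module

lemma rotM_det {d : ℕ} {α β : Fin d} (h : α ≠ β) (t : ℝ) : (rotM α β t).det = 1 := by
  have hcont : Continuous fun u : ℝ => (rotM α β u).det := by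
    apply Continuous.matrix_det
    unfold rotM
    exact (continuous_const.add (((Real.continuous_cos.sub continuous_const).smul
      continuous_const))).add (Real.continuous_sin.smul continuous_const)
  have hsq : ∀ u : ℝ, (rotM α β u).det ^ 2 = 1 := by
    intro u
    have := congrArg Matrix.det (rotM_mul_transpose h u)
    rw [Matrix.det_mul, Matrix.det_transpose, Matrix.det_one] at this
    nlinarith [this]
  have h0 : (rotM α β 0).det = 1 := by rw [rotM_zero]; exact Matrix.det_one
  by_contra hne
  have ht : (rotM α β t).det = -1 := by
    have h2 := hsq t
    have h3 : ((rotM α β t).det - 1) * ((rotM α β t).det + 1) = 0 := by nlinarith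
    rcases mul_eq_zero.mp h3 with h4 | h4
    · exact absurd (by linarith) hne
    · linarith
  have hmem : (0 : ℝ) ∈ Set.uIcc ((fun u => (rotM α β u).det) 0) ((fun u => (rotM α β u).det) t) := by
    simp only [h0, ht]
    rw [Set.mem_uIcc]
    norm_num
  obtain ⟨s, _, hs⟩ := intermediate_value_uIcc hcont.continuousOn hmem
  have := hsq s
  rw [show (rotM α β s).det = 0 from hs] at this
  norm_num at this

lemma trace_mul_stdBasis {d : ℕ} (S : Matrix (Fin d) (Fin d) ℝ) (i j : Fin d) :
    Matrix.trace (S * single i j (1 : ℝ)) = S j i := by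
  rw [Matrix.trace_mul_comm, Matrix.trace]
  rw [Finset.sum_eq_single i]
  · simp
  · intro b _ hb
    simp [Matrix.diag_apply, hb]
  · simp

lemma trace_mul_rotM {d : ℕ} (S : Matrix (Fin d) (Fin d) ℝ) (α β : Fin d) (t : ℝ) :
    Matrix.trace (S * rotM α β t)
      = Matrix.trace S + (Real.cos t - 1) * (S α α + S β β)
        + Real.sin t * (S α β - S β α) := by
  unfold rotM
  rw [mul_add, mul_add, Matrix.mul_smul, Matrix.mul_smul, Matrix.trace_add, Matrix.trace_add,
    Matrix.trace_smul, Matrix.trace_smul, mul_one, mul_add, mul_sub,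
    Matrix.trace_add, Matrix.trace_sub, trace_mul_stdBasis, trace_mul_stdBasis,
    trace_mul_stdBasis, trace_mul_stdBasis]
  simp only [smul_eq_mul]
  try ring

theorem stmt14 {d N : ℕ}
    (z x : Fin N → EuclideanSpace ℝ (Fin d)) (hz : ∑ i : Fin N, z i = 0)
    (θ₀ : Matrix (Fin d) (Fin d) ℝ) (η₀ : EuclideanSpace ℝ (Fin d)) (hθ₀ : IsSO θ₀)
    (hmin : ∀ (θ : Matrix (Fin d) (Fin d) ℝ) (η : EuclideanSpace ℝ (Fin d)), IsSO θ →
      ∑ i : Fin N, ‖x i - matAct θ₀ (z i) - η₀‖ ^ 2 ≤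
        ∑ i : Fin N, ‖x i - matAct θ (z i) - η‖ ^ 2) :
    (Qmat z x * θ₀)ᵀ = Qmat z x * θ₀ := by
  set Q := Qmat z x with hQ
  have expand : ∀ (ψ : Matrix (Fin d) (Fin d) ℝ), ψ * ψᵀ = 1 →
      ∑ i : Fin N, ‖x i - matAct ψ (z i) - η₀‖ ^ 2
        = ∑ i : Fin N, (‖x i - η₀‖ ^ 2 + ‖z i‖ ^ 2) - 2 * Matrix.trace (Q * ψ) := by
    intro ψ hψ
    rw [← inner_sum_eq z x hz ψ η₀, Finset.mul_sum, ← Finset.sum_sub_distrib]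
    refine Finset.sum_congr rfl fun i _ => ?_
    have hre : x i - matAct ψ (z i) - η₀ = (x i - η₀) - matAct ψ (z i) := sub_right_comm _ _ _
    rw [hre, norm_sub_sq_real]
    have hn : ‖matAct ψ (z i)‖ ^ 2 = ‖z i‖ ^ 2 := by
      rw [← real_inner_self_eq_norm_sq, ← real_inner_self_eq_norm_sq, matAct_inner ψ hψ]
    rw [hn]
    ring
  have htr : ∀ θ : Matrix (Fin d) (Fin d) ℝ, IsSO θ →
      Matrix.trace (Q * θ) ≤ Matrix.trace (Q * θ₀) := by
    intro θ hθ
    have h := hmin θ η₀ hθ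
    rw [expand θ hθ.1, expand θ₀ hθ₀.1] at h
    linarith
  have key : ∀ (α β : Fin d), α ≠ β → (Q * θ₀) β α = (Q * θ₀) α β := by
    intro α β hne
    set S := Q * θ₀ with hS
    have hSO : ∀ t : ℝ, IsSO (θ₀ * rotM α β t) := by
      intro t
      constructor
      · rw [Matrix.transpose_mul, mul_assoc, ← mul_assoc (rotM α β t),
          rotM_mul_transpose hne, one_mul, hθ₀.1]
      · rw [Matrix.det_mul, hθ₀.2, rotM_det hne, mul_one]
    set g : ℝ → ℝ := fun t =>
      (Real.cos t - 1) * (S α α + S β β) + Real.sin t * (S α β - S β α) with hg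
    have hmax : ∀ t : ℝ, g t ≤ g 0 := by
      intro t
      have h1 := htr (θ₀ * rotM α β t) (hSO t)
      rw [← mul_assoc, ← hS, trace_mul_rotM] at h1
      simp only [hg]
      simp only [Real.cos_zero, Real.sin_zero]
      linarith
    have hloc : IsLocalMax g 0 := Filter.Eventually.of_forall hmax
    have hderiv : HasDerivAt g (S α β - S β α) 0 := by
      have h1 : HasDerivAt (fun t : ℝ => (Real.cos t - 1) * (S α α + S β β))
          ((-Real.sin 0) * (S α α + S β β)) 0 :=
        ((Real.hasDerivAt_cos 0).sub_const 1).mul_const _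
      have h2 : HasDerivAt (fun t : ℝ => Real.sin t * (S α β - S β α))
          (Real.cos 0 * (S α β - S β α)) 0 :=
        (Real.hasDerivAt_sin 0).mul_const _
      have h3 := h1.add h2
      simpa [Real.sin_zero, Real.cos_zero, Pi.add_def] using h3
    have h4 := hloc.deriv_eq_zero
    rw [hderiv.deriv] at h4
    linarith
  ext β α
  rw [Matrix.transpose_apply]
  by_cases hab : α = β
  · rw [hab]
  · exact (key α β hab).symm
end

section
/- Let e_1, …, e_d ∈ ℝ^d satisfy ⟨e_α, e_β⟩ = (1 + δ_{αβ})/2 and let Λ_d = {Σ_{α=1}^d ξ_α e_α : ξ ∈ ℤ^d} be the d-dimensional triangular lattice. Then c(Λ_d) := inf{|x| : x ∈ Λ_d, |x| ≠ 0 and |x| ≠ 1} equals 2 when d = 1, equals √3 when d = 2, and equals √2 when d ≥ 3; moreover in each case the infimum is attained by some lattice vector. -/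
lemma key18 {d : ℕ} (e : Fin d → EuclideanSpace ℝ (Fin d))
    (he : ∀ α β : Fin d,
      (inner ℝ (e α) (e β) : ℝ) = (1 + if α = β then (1 : ℝ) else 0) / 2)
    (ξ : Fin d → ℤ) :
    ‖∑ α : Fin d, (ξ α : ℝ) • e α‖ =
      Real.sqrt ((((∑ α, ξ α) ^ 2 + ∑ α, (ξ α) ^ 2 : ℤ) : ℝ) / 2) := by
  rw [← Real.sqrt_sq (norm_nonneg _), ← real_inner_self_eq_norm_sq]
  congr 1
  rw [inner_sum]
  simp_rw [sum_inner, real_inner_smul_left, real_inner_smul_right, he]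
  push_cast
  have h2 : ∀ x : Fin d,
      (∑ x1 : Fin d, (ξ x1 : ℝ) * ((ξ x : ℝ) * ((1 + if x1 = x then (1:ℝ) else 0)/2)))
        = (∑ x1 : Fin d, (ξ x1 : ℝ)) * (ξ x) / 2 + (ξ x : ℝ) * (ξ x) / 2 := by
    intro x
    have h1 : ∀ x1 : Fin d, (ξ x1 : ℝ) * ((ξ x : ℝ) * ((1 + if x1 = x then (1:ℝ) else 0)/2))
        = (ξ x1 : ℝ) * (ξ x) / 2 + if x1 = x then (ξ x1 : ℝ) * (ξ x) / 2 else 0 := by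
      intro x1; split_ifs <;> ring
    rw [Finset.sum_congr rfl fun x1 _ => h1 x1, Finset.sum_add_distrib,
      Finset.sum_ite_eq' Finset.univ x (fun x1 => (ξ x1 : ℝ) * (ξ x) / 2)]
    simp [Finset.sum_div, Finset.sum_mul]
  rw [Finset.sum_congr rfl fun x _ => h2 x, Finset.sum_add_distrib]
  rw [← Finset.sum_div, ← Finset.sum_div, ← Finset.mul_sum, ← add_div, sq]
  congr 2
  exact Finset.sum_congr rfl fun x _ => (pow_two _).symm

lemma par18 {d : ℕ} (ξ : Fin d → ℤ) :
    (2 : ℤ) ∣ ((∑ α, ξ α) ^ 2 + ∑ α, (ξ α) ^ 2) := by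
  have h : ((((∑ α, ξ α) ^ 2 + ∑ α, (ξ α) ^ 2 : ℤ)) : ZMod 2) = 0 := by
    push_cast
    have hsq : ∀ a : ZMod 2, a ^ 2 = a := by decide
    rw [hsq]
    rw [Finset.sum_congr rfl fun α _ => hsq ((ξ α : ZMod 2))]
    exact CharTwo.add_self_eq_zero _
  exact_mod_cast (ZMod.intCast_zmod_eq_zero_iff_dvd _ 2).mp h

theorem stmt18 {d : ℕ} (e : Fin d → EuclideanSpace ℝ (Fin d))
    (he : ∀ α β : Fin d,
      (inner ℝ (e α) (e β) : ℝ) = (1 + if α = β then (1 : ℝ) else 0) / 2) :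
    (d = 1 → IsLeast {r : ℝ | ∃ ξ : Fin d → ℤ,
        r = ‖∑ α : Fin d, (ξ α : ℝ) • e α‖ ∧ r ≠ 0 ∧ r ≠ 1} 2) ∧
    (d = 2 → IsLeast {r : ℝ | ∃ ξ : Fin d → ℤ,
        r = ‖∑ α : Fin d, (ξ α : ℝ) • e α‖ ∧ r ≠ 0 ∧ r ≠ 1} (Real.sqrt 3)) ∧
    (3 ≤ d → IsLeast {r : ℝ | ∃ ξ : Fin d → ℤ,
        r = ‖∑ α : Fin d, (ξ α : ℝ) • e α‖ ∧ r ≠ 0 ∧ r ≠ 1} (Real.sqrt 2)) := by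
  refine ⟨?_, ?_, ?_⟩
  · -- d = 1
    rintro rfl
    constructor
    · refine ⟨fun _ => 2, ?_, by norm_num, by norm_num⟩
      rw [key18 e he]
      simp only [Fin.sum_univ_one]
      rw [show ((((2:ℤ))^2 + (2:ℤ)^2 : ℤ) : ℝ)/2 = 2^2 by norm_num]
      rw [Real.sqrt_sq (by norm_num)]
    · rintro r ⟨ξ, hr, h0, h1⟩
      rw [key18 e he] at hr
      simp only [Fin.sum_univ_one] at hr
      have hm : (((ξ 0) ^ 2 + (ξ 0) ^ 2 : ℤ) : ℝ) / 2 = (((ξ 0).natAbs : ℝ)) ^ 2 := by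
        push_cast [Nat.cast_natAbs]
        rw [sq_abs]; ring
      rw [hm, Real.sqrt_sq (by positivity)] at hr
      have hn0 : (ξ 0).natAbs ≠ 0 := by
        rintro h; rw [h] at hr; simp at hr; exact h0 hr
      have hn1 : (ξ 0).natAbs ≠ 1 := by
        rintro h; rw [h] at hr; simp at hr; exact h1 hr
      have : (2 : ℕ) ≤ (ξ 0).natAbs := by omega
      rw [hr]; exact_mod_cast this
  · -- d = 2
    rintro rfl
    constructor
    · have h3 : (1:ℝ) < Real.sqrt 3 := by
        rw [show (1:ℝ) = Real.sqrt 1 by simp]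
        exact Real.sqrt_lt_sqrt (by norm_num) (by norm_num)
      refine ⟨fun _ => 1, ?_, by positivity, ne_of_gt h3⟩
      rw [key18 e he]
      simp only [Fin.sum_univ_two]
      norm_num
    · rintro r ⟨ξ, hr, h0, h1⟩
      rw [key18 e he] at hr
      simp only [Fin.sum_univ_two] at hr
      set x := ξ 0 with hx
      set y := ξ 1 with hy
      set m : ℤ := x ^ 2 + x * y + y ^ 2 with hmdef
      have hm : (((x + y) ^ 2 + (x ^ 2 + y ^ 2) : ℤ) : ℝ) / 2 = ((m : ℤ) : ℝ) := by
        push_cast [hmdef]; ring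
      rw [hm] at hr
      have hmnn : 0 ≤ m := by nlinarith [sq_nonneg (2*x + y), sq_nonneg y]
      have hm0 : m ≠ 0 := by
        rintro h; rw [h] at hr; simp at hr; exact h0 hr
      have hm1 : m ≠ 1 := by
        rintro h; rw [h] at hr; simp at hr; exact h1 hr
      have hm2 : m ≠ 2 := by
        intro h
        have hy2 : y ^ 2 ≤ 2 := by nlinarith [sq_nonneg (2*x + y)]
        have hx2 : x ^ 2 ≤ 2 := by nlinarith [sq_nonneg (x + 2*y)]
        have hxb : -2 ≤ x ∧ x ≤ 2 := by constructor <;> nlinarith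
        have hyb : -2 ≤ y ∧ y ≤ 2 := by constructor <;> nlinarith
        obtain ⟨hx1, hx2'⟩ := hxb
        obtain ⟨hy1, hy2'⟩ := hyb
        interval_cases x <;> interval_cases y <;> omega
      have hm3 : (3 : ℤ) ≤ m := by omega
      rw [hr]
      exact Real.sqrt_le_sqrt (by exact_mod_cast hm3)
  · -- d ≥ 3
    intro hd
    have h2 : (1:ℝ) < Real.sqrt 2 := by
      rw [show (1:ℝ) = Real.sqrt 1 by simp]
      exact Real.sqrt_lt_sqrt (by norm_num) (by norm_num)
    constructor
    · set i0 : Fin d := ⟨0, by omega⟩ with hi0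
      set i1 : Fin d := ⟨1, by omega⟩ with hi1
      set i2 : Fin d := ⟨2, by omega⟩ with hi2
      have h01 : i0 ≠ i1 := by simp [hi0, hi1, Fin.ext_iff]
      have h02 : i0 ≠ i2 := by simp [hi0, hi2, Fin.ext_iff]
      have h12 : i1 ≠ i2 := by simp [hi1, hi2, Fin.ext_iff]
      set ξ : Fin d → ℤ := fun α =>
        (if α = i0 then 1 else 0) + (if α = i1 then 1 else 0) + (if α = i2 then -1 else 0)
        with hξ
      have hs : (∑ α, ξ α) = 1 := by
        simp only [hξ, Finset.sum_add_distrib, Finset.sum_ite_eq', Finset.mem_univ, if_true]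
        ring
      have hq : (∑ α, (ξ α) ^ 2) = 3 := by
        have : ∀ α, (ξ α) ^ 2 =
            (if α = i0 then 1 else 0) + (if α = i1 then 1 else 0) + (if α = i2 then 1 else 0) := by
          intro α
          simp only [hξ]
          split_ifs with a b c <;> simp_all
        rw [Finset.sum_congr rfl fun α _ => this α]
        simp only [Finset.sum_add_distrib, Finset.sum_ite_eq', Finset.mem_univ, if_true]
        ring
      refine ⟨ξ, ?_, by positivity, ne_of_gt h2⟩
      rw [key18 e he, hs, hq]
      norm_num
    · rintro r ⟨ξ, hr, h0, h1⟩
      rw [key18 e he] at hr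
      set M : ℤ := (∑ α, ξ α) ^ 2 + ∑ α, (ξ α) ^ 2 with hMdef
      have hMnn : 0 ≤ M := by positivity
      have hMev : (2 : ℤ) ∣ M := par18 ξ
      have hM0 : M ≠ 0 := by
        rintro h; rw [h] at hr; simp at hr; exact h0 hr
      have hM2 : M ≠ 2 := by
        rintro h; rw [h] at hr; norm_num at hr; exact h1 hr
      have hM4 : (4 : ℤ) ≤ M := by omega
      rw [hr]
      apply Real.sqrt_le_sqrt
      have : (4 : ℝ) ≤ (M : ℝ) := by exact_mod_cast hM4
      linarith
end
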